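/- Let n ≥ 2 and let S = L_{B₂}(n). Then in the free abelian group ℤ[BP] on the set of bipartitions, π_S( Σ_{k=0}^{n−2} (−1)^{k+n} A( 2^k1^{n−k−1}.(n−k−2) ) ) = (−1)^n 1^{n−1}.(n−1) + 2^{n−1}.∅. -/

import Mathlib

open scoped Classical

noncomputable section

/-- A partition: an antitone, eventually zero sequence of natural numbers.
`parts k` is the `(k+1)`-st part `λ_{k+1}`. -/
structure SeqPartition where
  parts : ℕ → ℕ
  antitone' : Antitone parts
  exists_zero : ∃ N, parts N = 0

namespace SeqPartition

lemma sorted_getD_antitone {l : List ℕ} (h : l.Pairwise (· ≥ ·)) :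
    Antitone (fun k => l.getD k 0) := by
  intro i j hij
  simp only
  rcases lt_or_ge j l.length with hj | hj
  · have hi : i < l.length := lt_of_le_of_lt hij hj
    rw [List.getD_eq_getElem l 0 hj, List.getD_eq_getElem l 0 hi]
    rcases eq_or_lt_of_le hij with rfl | hlt
    · exact le_rfl
    · exact List.pairwise_iff_getElem.mp h i j hi hj hlt
  · rw [List.getD_eq_default l 0 hj]
    exact Nat.zero_le _

/-- The partition whose multiset of (nonzero) parts is the multiset of nonzero
elements of `m`. -/
def ofMul (m : Multiset ℕ) : SeqPartition where
  parts := fun k => ((m.sort (· ≤ ·)).reverse).getD k 0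
  antitone' := by
    apply sorted_getD_antitone
    rw [List.pairwise_reverse]
    exact Multiset.pairwise_sort (r := (· ≤ ·)) (s := m)
  exists_zero := ⟨((m.sort (· ≤ ·)).reverse).length, List.getD_eq_default _ _ le_rfl⟩

/-- The size `|λ|` of a partition: the sum of its parts. -/
def size (p : SeqPartition) : ℕ := ∑ i ∈ Finset.range (Nat.find p.exists_zero), p.parts i

lemma finite_gt (p : SeqPartition) (k : ℕ) : {i : ℕ | k < p.parts i}.Finite := by
  obtain ⟨N, hN⟩ := p.exists_zero
  apply (Set.finite_Iio N).subset
  intro i hi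
  simp only [Set.mem_setOf_eq] at hi
  by_contra hc
  simp only [Set.mem_Iio, not_lt] at hc
  have := p.antitone' hc
  omega

/-- The conjugate (transpose) partition. -/
def conj (p : SeqPartition) : SeqPartition where
  parts := fun k => {i : ℕ | k < p.parts i}.ncard
  antitone' := fun a b hab =>
    Set.ncard_le_ncard (fun i hi => lt_of_le_of_lt hab hi) (p.finite_gt a)
  exists_zero := by
    refine ⟨p.parts 0, ?_⟩
    have h : {i : ℕ | p.parts 0 < p.parts i} = ∅ := by
      ext i
      simp only [Set.mem_setOf_eq, Set.mem_empty_iff_false, iff_false, not_lt]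
      exact p.antitone' (Nat.zero_le i)
    try simp only []
    rw [h, Set.ncard_empty]

/-- The 180°-rotation of the complement of `p` inside the rectangle with
`rows` rows of length `c`: the partition `(c - p_rows, c - p_{rows-1}, …, c - p₁)`. -/
def rotCompl (c rows : ℕ) (p : SeqPartition) : SeqPartition where
  parts := fun k => if k < rows then c - p.parts (rows - 1 - k) else 0
  antitone' := by
    intro a b hab
    by_cases hb : b < rows
    · have ha : a < rows := lt_of_le_of_lt hab hb
      simp only [if_pos hb, if_pos ha]
      exact Nat.sub_le_sub_left (p.antitone' (by omega)) c
    · simp only [if_neg hb]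
      exact Nat.zero_le _
  exists_zero := ⟨rows, by simp⟩

end SeqPartition

/-- A bipartition: a pair of partitions. -/
abbrev Bipartition := SeqPartition × SeqPartition

/-- The size of a bipartition. -/
def Bipartition.size (l : Bipartition) : ℕ := l.1.size + l.2.size

/-- The bipartition whose components have parts the multisets `a` and `b`. -/
def bip (a b : Multiset ℕ) : Bipartition := (SeqPartition.ofMul a, SeqPartition.ofMul b)

/-- The multiset of parts of the partition `a 1^b` (one part `a`, then `b` parts `1`). -/
def hook (a b : ℕ) : Multiset ℕ := a ::ₘ Multiset.replicate b 1

/-- The charged β-set of a partition, as a sequence: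
`betaSet p s i = λ_{i+1} + s - (i+1) + 1`. -/
def betaSet (p : SeqPartition) (s : ℤ) (i : ℕ) : ℤ := (p.parts i : ℤ) + s - i

/-- The charged symbol of a bipartition with charge `σ`, as a pair of subsets of `ℤ`. -/
def symbolOf (l : Bipartition) (σ : ℤ × ℤ) : Set ℤ × Set ℤ :=
  (Set.range (betaSet l.1 σ.1), Set.range (betaSet l.2 σ.2))

/-- The charge `σ_t`. -/
def sigmaT (t : ℕ) : ℤ × ℤ :=
  if Even t then ((t : ℤ), -1 - (t : ℤ)) else (-1 - (t : ℤ), (t : ℤ))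

/-- The trivial symbol `({0,-1,-2,…},{-1,-2,-3,…})`, the symbol of the empty
bipartition with charge `σ₀ = (0,-1)`. -/
def trivialSymbol : Set ℤ × Set ℤ := ({z : ℤ | z ≤ 0}, {z : ℤ | z ≤ -1})

/-- Removing one `n`-co-hook from the symbol `Λ`, yielding `Λ'`: remove `x+n` from one
row, adjoin `x` to the other row, and exchange the two rows. -/
def CohookStep (n : ℕ) (Λ Λ' : Set ℤ × Set ℤ) : Prop :=
  (∃ x : ℤ, x + n ∈ Λ.1 ∧ x ∉ Λ.2 ∧ Λ' = (Λ.2 ∪ {x}, Λ.1 \ {x + n})) ∨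
  (∃ x : ℤ, x + n ∈ Λ.2 ∧ x ∉ Λ.1 ∧ Λ' = (Λ.2 \ {x + n}, Λ.1 ∪ {x}))

/-- `C` is the `n`-co-core of `Λ`: it is obtained from `Λ` by recursively removing
`n`-co-hooks, and no further `n`-co-hook can be removed. -/
def IsCocore (n : ℕ) (Λ C : Set ℤ × Set ℤ) : Prop :=
  Relation.ReflTransGen (CohookStep n) Λ C ∧ ∀ C', ¬ CohookStep n C C'

/-- Number of entries of the charged β-set of `p` that are `≥ α` (with multiplicity). -/
def betaCountGE (p : SeqPartition) (s α : ℤ) : ℕ := Nat.card {i : ℕ // α ≤ betaSet p s i}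

/-- Number of entries `≥ α`, with multiplicity, of the multiset union of the two rows
of the symbol of `l` with charge `σ`. -/
def symCountGE (l : Bipartition) (σ : ℤ × ℤ) (α : ℤ) : ℕ :=
  betaCountGE l.1 σ.1 α + betaCountGE l.2 σ.2 α

/-- The composition `ϖ_Λ` of the symbol of `l` with charge `σ`: `comp l σ k` is the
`(k+1)`-st largest entry (with multiplicity) of the multiset union of the two rows. -/
def comp (l : Bipartition) (σ : ℤ × ℤ) (k : ℕ) : ℤ :=
  sSup {z : ℤ | k + 1 ≤ symCountGE l σ z}

/-- All partial sums of the composition of the symbol `(l,σ)` are bounded by those of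
`(m,τ)`. -/
def DomLE (l : Bipartition) (σ : ℤ × ℤ) (m : Bipartition) (τ : ℤ × ℤ) : Prop :=
  ∀ j : ℕ, ∑ k ∈ Finset.range j, comp l σ k ≤ ∑ k ∈ Finset.range j, comp m τ k

/-- Strict dominance `Λ ⊲ Λ'` of symbols: the compositions differ and all partial sums
of the first are bounded by those of the second. -/
def DomLT (l : Bipartition) (σ : ℤ × ℤ) (m : Bipartition) (τ : ℤ × ℤ) : Prop :=
  comp l σ ≠ comp m τ ∧ DomLE l σ m τ

/-- A box `(x, y, j)` (0-indexed row `x`, 0-indexed column `y`, component `j`: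
`j = 0` is the first component, `j = 1` the second). -/
abbrev Box := ℕ × ℕ × Fin 2

/-- The component of a bipartition selected by `j : Fin 2`. -/
def Bipartition.partsOf (l : Bipartition) (j : Fin 2) : SeqPartition := if j = 0 then l.1 else l.2

/-- Membership of a box in the Young diagram of a bipartition. -/
def MemY (l : Bipartition) (b : Box) : Prop := b.2.1 < (l.partsOf b.2.2).parts b.1

/-- The entry of the charge `σ` corresponding to component `j`. -/
def chargeOf (σ : ℤ × ℤ) (j : Fin 2) : ℤ := if j = 0 then σ.1 else σ.2

/-- The charged content `co^σ(b) = y - x + σ_j` of a box. -/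
def content (σ : ℤ × ℤ) (b : Box) : ℤ := (b.2.1 : ℤ) - (b.1 : ℤ) + chargeOf σ b.2.2

/-- `j(b) ∈ {1,2}`: the component of a box, numbered 1 or 2. -/
def jval (b : Box) : ℕ := (b.2.2 : ℕ) + 1

/-- The counting function of the Dunkl–Griffeth order. -/
def dgCount (l : Bipartition) (s : ℤ × ℤ) (d : ℕ) (α : ℝ) (j : ℕ) : ℕ :=
  Nat.card {b : Box // MemY l b ∧
    (α < (content s b : ℝ) - (jval b : ℝ) * (d : ℝ) / 2 ∨
      ((content s b : ℝ) - (jval b : ℝ) * (d : ℝ) / 2 = α ∧ jval b ≤ j))}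

/-- The Dunkl–Griffeth order `λ ⪯_s μ` (with respect to `d`). -/
def DGLE (l m : Bipartition) (s : ℤ × ℤ) (d : ℕ) : Prop :=
  ∀ (α : ℝ), ∀ j ∈ ({1, 2} : Set ℕ), dgCount l s d α j ≤ dgCount m s d α j

/-- A box of the extended Young diagram: rows are infinite to the left, so the column
coordinate is an integer.  `(x, y, j)` is the box in (0-indexed) row `x`, with integer
column coordinate `y` (`y = 0` is the first column), in component `j`. -/
abbrev ExtBox := ℕ × ℤ × Fin 2

/-- Membership in the extended Young diagram of a bipartition. -/
def MemExtY (l : Bipartition) (b : ExtBox) : Prop :=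
  b.2.1 < ((l.partsOf b.2.2).parts b.1 : ℤ)

/-- The charged content of an extended box. -/
def contentExt (σ : ℤ × ℤ) (b : ExtBox) : ℤ := b.2.1 - (b.1 : ℤ) + chargeOf σ b.2.2

/-- `b` is a removable box of the bipartition `l`. -/
def Removable (l : Bipartition) (b : Box) : Prop :=
  (l.partsOf b.2.2).parts b.1 = b.2.1 + 1 ∧ (l.partsOf b.2.2).parts (b.1 + 1) ≤ b.2.1

/-- `b` is an addable box of the bipartition `l`. -/
def Addable (l : Bipartition) (b : Box) : Prop :=
  (l.partsOf b.2.2).parts b.1 = b.2.1 ∧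
    (b.1 = 0 ∨ b.2.1 + 1 ≤ (l.partsOf b.2.2).parts (b.1 - 1))

/-- The order in which boxes are listed in the `i`-word: increasing charged content,
a component-2 box preceding a component-1 box of equal charged content. -/
def BoxLT (σ : ℤ × ℤ) (b b' : Box) : Prop :=
  content σ b < content σ b' ∨
    (content σ b = content σ b' ∧ b.2.2 = 1 ∧ b'.2.2 = 0)

/-- `L` is the list of boxes underlying the `i`-word of `(l, σ)` with respect to `d`:
it lists, in increasing order, exactly the addable and removable boxes of `l` whose
charged content is congruent to `i` modulo `d`. -/
def IsIWord (l : Bipartition) (σ : ℤ × ℤ) (d : ℕ) (i : ZMod d) (L : List Box) : Prop :=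
  L.Pairwise (BoxLT σ) ∧
    ∀ b : Box, b ∈ L ↔ ((Addable l b ∨ Removable l b) ∧ ((content σ b : ZMod d) = i))

/-- The sign of a box in the `i`-word: `true` (`+`) for addable, `false` (`−`) for
removable boxes. -/
def signOf (l : Bipartition) (b : Box) : Bool := if Addable l b then true else false

/-- One reduction step on words: delete an adjacent pair `−+`. -/
def RedStep (w w' : List Bool) : Prop :=
  ∃ u v : List Bool, w = u ++ false :: true :: v ∧ w' = u ++ v

/-- `ẽ_i l = 0`: the reduced `i`-word of `(l, σ)` contains no `−`, i.e. the `i`-word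
reduces to a word consisting only of `+`'s. -/
def AnnihilatedE (l : Bipartition) (σ : ℤ × ℤ) (d : ℕ) (i : ZMod d) : Prop :=
  ∃ L : List Box, IsIWord l σ d i L ∧
    ∃ a : ℕ, Relation.ReflTransGen RedStep (L.map (signOf l)) (List.replicate a true)

/-- `q` is obtained from the partition `p` by adding one box. -/
def PCovers (p q : SeqPartition) : Prop :=
  ∃ x : ℕ, q.parts x = p.parts x + 1 ∧ ∀ y : ℕ, y ≠ x → q.parts y = p.parts y

/-- `m` is obtained from the bipartition `l` by adding one box to its Young diagram. -/
def BipCovers (l m : Bipartition) : Prop :=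
  (PCovers l.1 m.1 ∧ m.2 = l.2) ∨ (m.1 = l.1 ∧ PCovers l.2 m.2)

/-- `A(l) = Σ_μ μ`, the sum over all bipartitions obtained from `l` by adding one box,
as an element of the group of `ℤ`-valued functions on bipartitions. -/
def addB (l : Bipartition) : Bipartition → ℤ := fun m => if BipCovers l m then 1 else 0

/-- The projection `π_S` onto the span of the bipartitions lying in `S`. -/
def projS (S : Set Bipartition) (f : Bipartition → ℤ) : Bipartition → ℤ :=
  fun m => if m ∈ S then f m else 0

/-- The basis element of `ℤ[BP]` corresponding to a bipartition. -/
def deltaB (l : Bipartition) : Bipartition → ℤ := fun m => if m = l then 1 else 0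

/-- The bipartitions of `2n` labelling the principal-series unipotent characters in
the principal `Φ_{2n}`-block. -/
def PS (n : ℕ) : Set Bipartition :=
  {l | (∃ i j : ℕ, 0 < i ∧ i < n ∧ j ≤ n ∧
          l = bip (hook (n - i) j) (hook (n - j + 1) (i - 1))) ∨
       (∃ j : ℕ, j < 2 * n ∧ l = bip (hook (2 * n - j) j) 0) ∨
       (∃ i : ℕ, 0 < i ∧ i ≤ 2 * n ∧ l = bip 0 (hook (2 * n - i + 1) (i - 1)))}

/-- The bipartitions of `2n-2` labelling the `B₂`-series unipotent characters in the
principal `Φ_{2n}`-block: `2^i 1^{j-i-1} . (n-i-1)(n-j)` for `0 ≤ i < j ≤ n`. -/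
def LB2 (n : ℕ) : Set Bipartition :=
  {l | ∃ i j : ℕ, i < j ∧ j ≤ n ∧
        l = bip (Multiset.replicate i 2 + Multiset.replicate (j - i - 1) 1)
                {n - i - 1, n - j}}

/-- The bipartitions of `2n-6` labelling the `B₆`-series unipotent characters in the
principal `Φ_{2n}`-block: `(n-i-2)(n-j-1) . 2^{i-1} 1^{j-i-1}` for `0 < i < j < n`. -/
def LB6 (n : ℕ) : Set Bipartition :=
  {l | ∃ i j : ℕ, 0 < i ∧ i < j ∧ j < n ∧
        l = bip {n - i - 2, n - j - 1}
                (Multiset.replicate (i - 1) 2 + Multiset.replicate (j - i - 1) 1)}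

end

namespace Stmt14Aux

lemma pext {p q : SeqPartition} (h : p.parts = q.parts) : p = q := by
  cases p; cases q; simp_all

lemma parts_ofMul (m : Multiset ℕ) (L : List ℕ) (hs : L.Pairwise (· ≥ ·))
    (hm : ((L.reverse : List ℕ) : Multiset ℕ) = m) :
    (SeqPartition.ofMul m).parts = fun k => L.getD k 0 := by
  have h1 : m.sort (· ≤ ·) = L.reverse := by
    refine (fun hp hs => List.Perm.eq_of_pairwise' (Multiset.pairwise_sort _ _) hs hp) ?_ ?_
    · exact Multiset.coe_eq_coe.mp (by rw [Multiset.sort_eq, hm])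
    · rw [List.pairwise_reverse]; exact hs
  simp [SeqPartition.ofMul, h1]

def FP (k m : ℕ) : ℕ → ℕ := fun i => if i < k then 2 else if i < m then 1 else 0

def GP (a b : ℕ) : ℕ → ℕ := fun i => if i = 0 then a else if i = 1 then b else 0

lemma getD_replicate (a m i : ℕ) : (List.replicate m a).getD i 0 = if i < m then a else 0 := by
  split
  · rw [List.getD_eq_getElem _ _ (by simpa using ‹i < m›)]; simp
  · exact List.getD_eq_default _ _ (by simpa using not_lt.mp ‹¬ i < m›)

lemma parts_two_one (k j : ℕ) :
    (SeqPartition.ofMul (Multiset.replicate k 2 + Multiset.replicate j 1)).parts = FP k (k + j) := by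
  rw [parts_ofMul _ (List.replicate k 2 ++ List.replicate j 1)]
  · funext i
    by_cases h : i < k
    · rw [List.getD_append _ _ _ _ (by simpa using h), getD_replicate, if_pos h, FP]
      simp [h]
    · rw [List.getD_append_right _ _ _ _ (by simpa using not_lt.mp h), getD_replicate]
      simp only [List.length_replicate, FP, if_neg h]
      split
      · rw [if_pos (by omega)]
      · rw [if_neg (by omega)]
  · rw [List.pairwise_append]
    refine ⟨?_, ?_, ?_⟩
    · exact List.pairwise_replicate.mpr (Or.inr le_rfl)
    · exact List.pairwise_replicate.mpr (Or.inr le_rfl)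
    · intro x hx y hy
      rw [List.eq_of_mem_replicate hx, List.eq_of_mem_replicate hy]
      omega
  · rw [Multiset.coe_reverse, ← Multiset.coe_add, Multiset.coe_replicate, Multiset.coe_replicate]

lemma parts_pair (a b : ℕ) (h : b ≤ a) : (SeqPartition.ofMul {a, b}).parts = GP a b := by
  rw [parts_ofMul _ [a, b]]
  · funext i
    match i with
    | 0 => rfl
    | 1 => rfl
    | (n+2) => simp [GP, List.getD]
  · simp; exact h
  · simp only [List.reverse_cons, List.reverse_nil, List.nil_append, List.cons_append]
    exact Multiset.coe_eq_coe.mpr (List.Perm.swap a b [])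
  
lemma parts_single (a : ℕ) : (SeqPartition.ofMul {a}).parts = GP a 0 := by
  rw [parts_ofMul _ [a]]
  · funext i
    match i with
    | 0 => rfl
    | 1 => rfl
    | (n+2) => simp [GP, List.getD]
  · simp
  · rfl

lemma parts_nil : (SeqPartition.ofMul 0).parts = GP 0 0 := by
  rw [parts_ofMul 0 []]
  · funext i; simp [GP, List.getD]
  · simp
  · rfl

def lam (n k : ℕ) : Bipartition :=
  bip (Multiset.replicate k 2 + Multiset.replicate (n - k - 1) 1) {n - k - 2}

def mu (n k : ℕ) : Bipartition :=
  bip (Multiset.replicate k 2 + Multiset.replicate (n - k - 1) 1) {n - k - 1}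

lemma lam1_parts {n k : ℕ} (hk : k ≤ n - 1) : (lam n k).1.parts = FP k (n - 1) := by
  have : (lam n k).1 = SeqPartition.ofMul (Multiset.replicate k 2 + Multiset.replicate (n - k - 1) 1) := rfl
  rw [this, parts_two_one, show k + (n - k - 1) = n - 1 by omega]

lemma lam2_parts (n k : ℕ) : (lam n k).2.parts = GP (n - k - 2) 0 := parts_single _

lemma mu1_parts {n k : ℕ} (hk : k ≤ n - 1) : (mu n k).1.parts = FP k (n - 1) := by
  have : (mu n k).1 = SeqPartition.ofMul (Multiset.replicate k 2 + Multiset.replicate (n - k - 1) 1) := rfl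
  rw [this, parts_two_one, show k + (n - k - 1) = n - 1 by omega]

lemma mu2_parts (n k : ℕ) : (mu n k).2.parts = GP (n - k - 1) 0 := parts_single _

lemma mu_mem {n k : ℕ} (hn : 2 ≤ n) (hk : k ≤ n - 1) : mu n k ∈ LB2 n := by
  refine ⟨k, n, by omega, le_rfl, ?_⟩
  have h2 : SeqPartition.ofMul ({n - k - 1} : Multiset ℕ)
      = SeqPartition.ofMul ({n - k - 1, n - n} : Multiset ℕ) := by
    apply pext
    rw [parts_single, parts_pair _ _ (by omega), Nat.sub_self]
  exact Prod.ext rfl h2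

lemma covers_mu_self {n k : ℕ} (hn : 2 ≤ n) (hk : k < n - 1) :
    BipCovers (lam n k) (mu n k) := by
  refine Or.inr ⟨rfl, ?_⟩
  refine ⟨0, ?_, ?_⟩
  · have h1 : (mu n k).2.parts 0 = n - k - 1 := by rw [mu2_parts]; rfl
    have h2 : (lam n k).2.parts 0 = n - k - 2 := by rw [lam2_parts]; rfl
    rw [h1, h2]; omega
  · intro y hy
    rw [mu2_parts, lam2_parts]
    simp only [GP, if_neg hy]

lemma covers_mu_succ {n k : ℕ} (hn : 2 ≤ n) (hk : k < n - 1) :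
    BipCovers (lam n k) (mu n (k + 1)) := by
  refine Or.inl ⟨?_, ?_⟩
  · refine ⟨k, ?_, ?_⟩
    · rw [lam1_parts (by omega), mu1_parts (by omega)]
      simp only [FP]
      rw [if_pos (by omega), if_neg (by omega), if_pos (by omega)]
    · intro y hy
      rw [lam1_parts (by omega), mu1_parts (by omega)]
      simp only [FP]
      split_ifs <;> omega
  · show SeqPartition.ofMul _ = SeqPartition.ofMul _
    rw [show n - (k + 1) - 1 = n - k - 2 by omega]

lemma mu_ne {n k : ℕ} (hn : 2 ≤ n) (hk : k < n - 1) : mu n k ≠ mu n (k + 1) := by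
  intro h
  have h2 : (mu n k).2.parts = (mu n (k + 1)).2.parts := by rw [h]
  rw [mu2_parts, mu2_parts] at h2
  have h0 := congrFun h2 0
  simp [GP] at h0
  omega

lemma forward {n k : ℕ} (hn : 2 ≤ n) (hk : k < n - 1) (m : Bipartition)
    (hm : m ∈ LB2 n) (hc : BipCovers (lam n k) m) :
    m = mu n k ∨ m = mu n (k + 1) := by
  obtain ⟨i, j, hij, hjn, rfl⟩ := hm
  have hm1 : (bip (Multiset.replicate i 2 + Multiset.replicate (j - i - 1) 1)
      ({n - i - 1, n - j} : Multiset ℕ)).1.parts = FP i (j - 1) := by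
    have : (bip (Multiset.replicate i 2 + Multiset.replicate (j - i - 1) 1)
        ({n - i - 1, n - j} : Multiset ℕ)).1
        = SeqPartition.ofMul (Multiset.replicate i 2 + Multiset.replicate (j - i - 1) 1) := rfl
    rw [this, parts_two_one, show i + (j - i - 1) = j - 1 by omega]
  have hm2 : (bip (Multiset.replicate i 2 + Multiset.replicate (j - i - 1) 1)
      ({n - i - 1, n - j} : Multiset ℕ)).2.parts = GP (n - i - 1) (n - j) :=
    parts_pair _ _ (by omega)
  rcases hc with ⟨hPC, hEq⟩ | ⟨hEq, hPC⟩
  · -- box added to first component: second components equal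
    have h2 := congrArg SeqPartition.parts hEq
    rw [hm2, lam2_parts] at h2
    have a0 := congrFun h2 0
    have a1 := congrFun h2 1
    simp only [GP] at a0 a1
    norm_num at a0 a1
    have hJ : j = n := by omega
    have hI : i = k + 1 := by omega
    rw [hI, hJ]
    right
    refine Prod.ext rfl ?_
    apply pext
    rw [mu2_parts]
    show (SeqPartition.ofMul ({n - (k+1) - 1, n - n} : Multiset ℕ)).parts = _
    rw [parts_pair _ _ (by omega), Nat.sub_self]
  · -- box added to second component: first components equal
    have h1 := congrArg SeqPartition.parts hEq
    rw [hm1, lam1_parts (by omega)] at h1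
    have c1 := congrFun h1 i
    have c2 := congrFun h1 k
    have c3 := congrFun h1 (j - 1)
    simp only [FP] at c1 c2 c3
    have hik : i = k ∧ j = n := by
      split_ifs at c1 c2 c3 <;> omega
    obtain ⟨hI, hJ⟩ := hik
    rw [hI, hJ]
    left
    refine Prod.ext rfl ?_
    apply pext
    rw [mu2_parts]
    show (SeqPartition.ofMul ({n - k - 1, n - n} : Multiset ℕ)).parts = _
    rw [parts_pair _ _ (by omega), Nat.sub_self]

lemma key {n k : ℕ} (hn : 2 ≤ n) (hk : k < n - 1) :
    projS (LB2 n) (addB (lam n k)) = deltaB (mu n k) + deltaB (mu n (k + 1)) := by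
  funext m
  simp only [projS, addB, deltaB, Pi.add_apply]
  by_cases h1 : m = mu n k
  · subst h1
    rw [if_pos (mu_mem hn (by omega)), if_pos (covers_mu_self hn hk), if_pos rfl,
      if_neg (mu_ne hn hk)]
    ring
  · by_cases h2 : m = mu n (k + 1)
    · subst h2
      rw [if_pos (mu_mem hn (by omega)), if_pos (covers_mu_succ hn hk),
        if_neg (fun h => mu_ne hn hk h.symm), if_pos rfl]
      ring
    · rw [if_neg h1, if_neg h2]
      by_cases hm : m ∈ LB2 n
      · rw [if_pos hm, if_neg, add_zero]
        intro hc
        rcases forward hn hk m hm hc with h | h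
        · exact h1 h
        · exact h2 h
      · rw [if_neg hm]; ring
      
lemma projS_smul (S : Set Bipartition) (c : ℤ) (f : Bipartition → ℤ) :
    projS S (c • f) = c • projS S f := by
  funext m
  simp only [projS, Pi.smul_apply, smul_eq_mul]
  split <;> simp

lemma projS_sum {ι : Type*} (S : Set Bipartition) (t : Finset ι) (f : ι → Bipartition → ℤ) :
    projS S (∑ i ∈ t, f i) = ∑ i ∈ t, projS S (f i) := by
  funext m
  simp only [projS, Finset.sum_apply]
  split
  · rfl
  · simp

lemma telescope {A : Type*} [AddCommGroup A] (D : ℕ → A) (M : ℕ) :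
    ∑ k ∈ Finset.range M, ((-1:ℤ)^k) • (D k + D (k+1)) = D 0 + ((-1:ℤ)^(M+1)) • D M := by
  induction M with
  | zero => simp
  | succ M ih =>
    rw [Finset.sum_range_succ, ih,
      show ((-1:ℤ))^(M+1) = -((-1:ℤ)^M) by ring,
      show ((-1:ℤ))^(M+1+1) = (-1:ℤ)^M by ring,
      neg_smul, smul_add]
    abel

lemma mu_zero (n : ℕ) (hn : 2 ≤ n) :
    mu n 0 = bip (Multiset.replicate (n - 1) 1) {n - 1} := by
  show bip (Multiset.replicate 0 2 + Multiset.replicate (n - 0 - 1) 1) {n - 0 - 1} = _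
  rw [show Multiset.replicate 0 2 + Multiset.replicate (n - 0 - 1) 1
      = Multiset.replicate (n - 1) 1 by simp]
  rfl

lemma mu_last (n : ℕ) (hn : 2 ≤ n) :
    mu n (n - 1) = bip (Multiset.replicate (n - 1) 2) 0 := by
  refine Prod.ext ?_ ?_
  · show SeqPartition.ofMul (Multiset.replicate (n-1) 2 + Multiset.replicate (n - (n-1) - 1) 1)
      = SeqPartition.ofMul (Multiset.replicate (n-1) 2)
    rw [show n - (n - 1) - 1 = 0 by omega]
    simp
  · show SeqPartition.ofMul ({n - (n-1) - 1} : Multiset ℕ) = SeqPartition.ofMul 0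
    apply pext
    rw [parts_single, parts_nil, show n - (n - 1) - 1 = 0 by omega]

end Stmt14Aux

/-- `π_S(Σ_{k=0}^{n-2} (-1)^{k+n} A(2^k1^{n-k-1}.(n-k-2)))
  = (-1)^n 1^{n-1}.(n-1) + 2^{n-1}.∅` for `S = L_{B₂}(n)`. -/
theorem decomposition_numbers_stmt14 (n : ℕ) (hn : 2 ≤ n) :
    projS (LB2 n)
        (∑ k ∈ Finset.range (n - 1),
          ((-1 : ℤ) ^ (k + n)) •
            addB (bip (Multiset.replicate k 2 + Multiset.replicate (n - k - 1) 1)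
              {n - k - 2}))
      = ((-1 : ℤ) ^ n) • deltaB (bip (Multiset.replicate (n - 1) 1) {n - 1})
        + deltaB (bip (Multiset.replicate (n - 1) 2) 0) := by
  classical
  rw [Stmt14Aux.projS_sum]
  have hstep : ∀ k ∈ Finset.range (n - 1),
      projS (LB2 n) (((-1 : ℤ) ^ (k + n)) •
        addB (bip (Multiset.replicate k 2 + Multiset.replicate (n - k - 1) 1)
          {n - k - 2}))
      = ((-1 : ℤ) ^ n) • (((-1 : ℤ) ^ k) •
          (deltaB (Stmt14Aux.mu n k) + deltaB (Stmt14Aux.mu n (k + 1)))) := by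
    intro k hk
    rw [Finset.mem_range] at hk
    rw [Stmt14Aux.projS_smul,
      show (bip (Multiset.replicate k 2 + Multiset.replicate (n - k - 1) 1)
        ({n - k - 2} : Multiset ℕ)) = Stmt14Aux.lam n k from rfl,
      Stmt14Aux.key hn hk, pow_add, mul_comm ((-1 : ℤ) ^ k) _, mul_smul]
  rw [Finset.sum_congr rfl hstep, ← Finset.smul_sum]
  have tel := Stmt14Aux.telescope (fun k => deltaB (Stmt14Aux.mu n k)) (n - 1)
  beta_reduce at tel
  rw [tel, show n - 1 + 1 = n by omega, smul_add, smul_smul,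
    show ((-1 : ℤ) ^ n * (-1 : ℤ) ^ n) = 1 by
      rw [← pow_add]; exact Even.neg_one_pow ⟨n, rfl⟩,
    one_smul, Stmt14Aux.mu_zero n hn, Stmt14Aux.mu_last n hn]
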